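/- A subset X of the Cantor space is σ-homogeneous if and only if X can be partitioned into countably many pairwise disjoint subspaces, each of which is closed in X and h-homogeneous in the subspace topology. -/

import Mathlib

/-- A topological space is *h-homogeneous* if every nonempty clopen subset,
with the subspace topology, is homeomorphic to the whole space. -/
def HHomogeneous (Y : Type*) [TopologicalSpace Y] : Prop :=
  ∀ U : Set Y, IsClopen U → U.Nonempty → Nonempty (U ≃ₜ Y)

/-- A subset `X` of the Cantor space is *σ-homogeneous* if it is a countable
union of h-homogeneous subspaces that are closed in `X`. -/
def SigmaHomogeneous (X : Set (ℕ → Bool)) : Prop :=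
  ∃ f : ℕ → Set (ℕ → Bool),
    (∀ i, f i ⊆ X) ∧
    (∀ i, IsClosed (Subtype.val ⁻¹' f i : Set ↥X)) ∧
    (∀ i, HHomogeneous ↥(f i)) ∧
    X = ⋃ i, f i

open Set Function TopologicalSpace

lemma hh_of_isEmpty (Y : Type*) [TopologicalSpace Y] [IsEmpty Y] : HHomogeneous Y := by
  rintro U _ ⟨x, -⟩
  exact (IsEmpty.false x).elim

lemma hh_transfer {Y Z : Type*} [TopologicalSpace Y] [TopologicalSpace Z]
    (e : Y ≃ₜ Z) (hZ : HHomogeneous Z) : HHomogeneous Y := by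
  intro U hU hUne
  have hclopen : IsClopen (e '' U) :=
    ⟨(e.isClosedMap _ hU.1), (e.isOpenMap _ hU.2)⟩
  obtain ⟨g⟩ := hZ (e '' U) hclopen (hUne.image e)
  exact ⟨(e.image U).trans (g.trans e.symm)⟩

/-- The canonical homeomorphism between a subset of a subspace and the
corresponding subspace of the ambient space. -/
noncomputable def homeoNested {α : Type*} [TopologicalSpace α] {A C : Set α} (hCA : C ⊆ A) :
    (Subtype.val ⁻¹' C : Set ↥A) ≃ₜ ↥C where
  toEquiv := Equiv.subtypeSubtypeEquivSubtype fun {x} hx => hCA hx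
  continuous_toFun := by
    exact Continuous.subtype_mk (continuous_subtype_val.comp continuous_subtype_val) _
  continuous_invFun := by
    exact Continuous.subtype_mk (Continuous.subtype_mk continuous_subtype_val _) _

lemma hh_clopen_inter {α : Type*} [TopologicalSpace α] {A : Set α}
    (hA : HHomogeneous ↥A) {K : Set α} (hK : IsClopen K) :
    HHomogeneous ↥(K ∩ A) := by
  rcases (K ∩ A).eq_empty_or_nonempty with h | h
  · rw [h]
    haveI : IsEmpty ↥(∅ : Set α) := Set.isEmpty_coe_sort.mpr rfl
    exact hh_of_isEmpty _
  · have hsub : K ∩ A ⊆ A := inter_subset_right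
    have hUeq : (Subtype.val ⁻¹' (K ∩ A) : Set ↥A) = Subtype.val ⁻¹' K := by
      ext x
      simp [x.2]
    have hUc : IsClopen (Subtype.val ⁻¹' (K ∩ A) : Set ↥A) := by
      rw [hUeq]
      exact ⟨hK.1.preimage continuous_subtype_val, hK.2.preimage continuous_subtype_val⟩
    have hUne : (Subtype.val ⁻¹' (K ∩ A) : Set ↥A).Nonempty := by
      obtain ⟨x, hx⟩ := h
      exact ⟨⟨x, hx.2⟩, hx⟩
    obtain ⟨g⟩ := hA _ hUc hUne
    exact hh_transfer (((homeoNested hsub).symm).trans g) hA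

/-- Every open subset of the Cantor space is a countable disjoint union of
clopen sets. -/
lemma exists_clopen_cover {O : Set (ℕ → Bool)} (hO : IsOpen O) :
    ∃ K : ℕ → Set (ℕ → Bool),
      (∀ n, IsClopen (K n)) ∧ Pairwise (Function.onFun Disjoint K) ∧ ⋃ n, K n = O := by
  obtain ⟨T, hTc, hTU⟩ :=
    TopologicalSpace.isOpen_iUnion_countable
      (ι := {V : Set (ℕ → Bool) // IsClopen V ∧ V ⊆ O})
      (fun i => i.1) (fun i => i.2.1.2)
  have hcov : ⋃ i : {V : Set (ℕ → Bool) // IsClopen V ∧ V ⊆ O}, i.1 = O := by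
    apply subset_antisymm
    · exact iUnion_subset fun i => i.2.2
    · intro x hx
      obtain ⟨V, hV, hxV, hVO⟩ :=
        isTopologicalBasis_isClopen.exists_subset_of_mem_open hx hO
      exact mem_iUnion.2 ⟨⟨V, hV, hVO⟩, hxV⟩
  set emp : {V : Set (ℕ → Bool) // IsClopen V ∧ V ⊆ O} :=
    ⟨∅, isClopen_empty, empty_subset O⟩ with hemp
  obtain ⟨g, hg⟩ := (hTc.insert emp).exists_eq_range (insert_nonempty _ _)
  set K₀ : ℕ → Set (ℕ → Bool) := fun n => (g n).1 with hK₀def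
  have hK₀clopen : ∀ n, IsClopen (K₀ n) := fun n => (g n).2.1
  have hK₀U : ⋃ n, K₀ n = O := by
    have h1 : ⋃ n, K₀ n = ⋃ i ∈ Set.range g, (i : Set (ℕ → Bool)) := by
      rw [biUnion_range]
    rw [h1, ← hg, biUnion_insert, hemp]
    simp only [empty_union]
    rw [hTU, hcov]
  have hps : ∀ n, IsClopen ((partialSups K₀ n : Set (ℕ → Bool))) := by
    intro n
    induction n with
    | zero => simpa using hK₀clopen 0
    | succ n ih =>
      rw [partialSups_add_one]
      exact IsClopen.union ih (hK₀clopen (n + 1))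
  refine ⟨disjointed K₀, ?_, ?_, ?_⟩
  · intro n
    cases n with
    | zero => rw [disjointed_zero]; exact hK₀clopen 0
    | succ n => rw [disjointed_add_one]; exact (hK₀clopen (n + 1)).diff (hps n)
  · exact disjoint_disjointed K₀
  · rw [iUnion_disjointed, hK₀U]

/-- A subset `X` of the Cantor space is σ-homogeneous iff it can be partitioned
into countably many pairwise disjoint subspaces, each closed in `X` and
h-homogeneous in the subspace topology. -/
theorem sigmaHomogeneous_iff_partition (X : Set (ℕ → Bool)) :
    SigmaHomogeneous X ↔
      ∃ f : ℕ → Set (ℕ → Bool),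
        (∀ i, f i ⊆ X) ∧
        Pairwise (Function.onFun Disjoint f) ∧
        (∀ i, IsClosed (Subtype.val ⁻¹' f i : Set ↥X)) ∧
        (∀ i, HHomogeneous ↥(f i)) ∧
        X = ⋃ i, f i := by
  constructor
  · rintro ⟨f, hfX, hfcl, hfh, hXU⟩
    -- get ambient closed sets
    have hF : ∀ i, ∃ F : Set (ℕ → Bool), IsClosed F ∧ f i = F ∩ X := by
      intro i
      obtain ⟨F, hFcl, hFe⟩ := isClosed_induced_iff.mp (hfcl i)
      refine ⟨F, hFcl, subset_antisymm ?_ ?_⟩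
      · intro x hx
        have hxX : x ∈ X := hfX i hx
        have : (⟨x, hxX⟩ : ↥X) ∈ (Subtype.val ⁻¹' F : Set ↥X) := by
          rw [hFe]; exact hx
        exact ⟨this, hxX⟩
      · rintro x ⟨hxF, hxX⟩
        have : (⟨x, hxX⟩ : ↥X) ∈ (Subtype.val ⁻¹' F : Set ↥X) := hxF
        rw [hFe] at this
        exact this
    choose F hFcl hfF using hF
    set O : ℕ → Set (ℕ → Bool) := fun i => (⋃ j ∈ Finset.range i, F j)ᶜ with hO
    have hOopen : ∀ i, IsOpen (O i) :=
      fun i => (isClosed_biUnion_finset fun j _ => hFcl j).isOpen_compl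
    choose K hKclopen hKdisj hKU using fun i => exists_clopen_cover (hOopen i)
    set G : ℕ × ℕ → Set (ℕ → Bool) := fun p => K p.1 p.2 ∩ f p.1 with hG
    set e : ℕ ≃ ℕ × ℕ := (Denumerable.eqv (ℕ × ℕ)).symm with he
    have hGX : ∀ p, G p ⊆ X := fun p => inter_subset_right.trans (hfX p.1)
    have hGdisj : Pairwise (Function.onFun Disjoint G) := by
      intro p q hpq
      rcases eq_or_ne p.1 q.1 with h1 | h1
      · have h2 : p.2 ≠ q.2 := by
          intro h2
          exact hpq (Prod.ext h1 h2)
        have := hKdisj p.1 h2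
        exact Disjoint.mono (inter_subset_left) (h1 ▸ inter_subset_left) this
      · -- wlog via helper
        have key : ∀ a b : ℕ × ℕ, a.1 < b.1 → Disjoint (G a) (G b) := by
          intro a b hab
          rw [Set.disjoint_left]
          rintro x ⟨hxK, hxf⟩ ⟨hxK', _⟩
          have hxF : x ∈ F a.1 := ((hfF a.1) ▸ hxf).1
          have hxO : x ∈ O b.1 := (hKU b.1) ▸ mem_iUnion.2 ⟨b.2, hxK'⟩
          exact hxO (mem_biUnion (Finset.mem_range.2 hab) hxF)
        rcases lt_or_gt_of_ne h1 with h | h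
        · exact key p q h
        · exact (key q p h).symm
    refine ⟨fun n => G (e n), fun n => hGX (e n), ?_, ?_, ?_, ?_⟩
    · intro m n hmn
      exact hGdisj (e.injective.ne hmn)
    · intro n
      set p := e n
      have heq : (Subtype.val ⁻¹' G p : Set ↥X) =
          Subtype.val ⁻¹' (K p.1 p.2 ∩ F p.1) := by
        ext x
        simp only [mem_preimage, hG, mem_inter_iff, hfF p.1]
        exact and_congr_right fun _ => ⟨fun h => h.1, fun h => ⟨h, x.2⟩⟩
      rw [heq]
      exact (((hKclopen p.1 p.2).1.inter (hFcl p.1)).preimage continuous_subtype_val)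
    · intro n
      exact hh_clopen_inter (hfh (e n).1) (hKclopen (e n).1 (e n).2)
    · rw [e.surjective.iUnion_comp G]
      apply subset_antisymm
      · intro x hx
        classical
        have hx' : ∃ i, x ∈ f i := by
          rw [hXU] at hx
          exact mem_iUnion.1 hx
        set i := Nat.find hx' with hi
        have hxf : x ∈ f i := Nat.find_spec hx'
        have hxO : x ∈ O i := by
          intro hmem
          obtain ⟨j, hj, hxF⟩ := by
            simpa using hmem
          have hxfj : x ∈ f j := (hfF j) ▸ ⟨hxF, hx⟩
          exact Nat.find_min hx' hj hxfj
        obtain ⟨m, hm⟩ := mem_iUnion.1 ((hKU i) ▸ hxO)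
        exact mem_iUnion.2 ⟨(i, m), hm, hxf⟩
      · exact iUnion_subset hGX
  · rintro ⟨f, h1, _, h3, h4, h5⟩
    exact ⟨f, h1, h3, h4, h5⟩
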